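/- A semiprime ring with infinitely many minimal prime ideals cannot be embedded (via an injective ring homomorphism) into a semiprimary ring. -/

import Mathlib

/-- A ring is semiprime if `a R a = 0` implies `a = 0`. -/
def IsSemiprimeRing' (R : Type*) [Ring R] : Prop :=
  ∀ a : R, (∀ r : R, a * r * a = 0) → a = 0

/-- A two-sided ideal `P` is prime if `P ≠ ⊤` and `a R b ⊆ P` implies `a ∈ P` or `b ∈ P`. -/
def TwoSidedIdeal.IsPrime' {R : Type*} [Ring R] (P : TwoSidedIdeal R) : Prop :=
  P ≠ ⊤ ∧ ∀ a b : R, (∀ r : R, a * r * b ∈ P) → a ∈ P ∨ b ∈ P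

/-- A minimal prime of a ring. -/
def TwoSidedIdeal.IsMinimalPrime' {R : Type*} [Ring R] (P : TwoSidedIdeal R) : Prop :=
  P.IsPrime' ∧ ∀ Q : TwoSidedIdeal R, Q.IsPrime' → Q ≤ P → Q = P

/-- A ring is semiprimary if its Jacobson radical `J` is nilpotent (all products of `n`
elements of `J` vanish, for some `n ≥ 1`) and the quotient `A/J` is semisimple Artinian. -/
def IsSemiprimaryRing' (A : Type*) [Ring A] : Prop :=
  IsSemisimpleRing ((TwoSidedIdeal.jacobson (⊥ : TwoSidedIdeal A)).ringCon.Quotient) ∧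
  ∃ n : ℕ, n ≠ 0 ∧ ∀ l : List A,
    (∀ x ∈ l, x ∈ TwoSidedIdeal.jacobson (⊥ : TwoSidedIdeal A)) → l.length = n → l.prod = 0

namespace StmtAux

variable {R : Type*} [Ring R]

/-- The right annihilator of a set. -/
def rAnn (T : Set R) : Set R := {x | ∀ t ∈ T, t * x = 0}

/-- A set closed under left and right multiplication by ring elements. -/
def MulClosed (T : Set R) : Prop := ∀ t ∈ T, ∀ ρ : R, ρ * t ∈ T ∧ t * ρ ∈ T

/-- An infinite "staircase" of elements. -/
def HasStair (R : Type*) [Ring R] : Prop :=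
  ∃ s x : ℕ → R, (∀ k, s k * x k ≠ 0) ∧ ∀ k j, k < j → s j * x k = 0

lemma mulClosed_coe (C : TwoSidedIdeal R) : MulClosed (C : Set R) := by
  intro t ht ρ
  exact ⟨C.mul_mem_left ρ t ht, C.mul_mem_right t ρ ht⟩

lemma exists_ne_zero_of_ne_bot {C : TwoSidedIdeal R} (hC : C ≠ ⊥) :
    ∃ c ∈ (C : Set R), c ≠ 0 := by
  by_contra h
  push_neg at h
  refine hC (TwoSidedIdeal.ext fun x => ?_)
  constructor
  · intro hx
    exact (TwoSidedIdeal.mem_bot _).2 (h x hx)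
  · intro hx
    rw [TwoSidedIdeal.mem_bot] at hx
    rw [hx]
    exact C.zero_mem

lemma hasStair_of_chain (X : ℕ → Set R) (T : ℕ → Set R)
    (hX : ∀ n, X n = rAnn (T n))
    (hmono : ∀ n, X n ⊆ X (n + 1)) (hne : ∀ n, X (n + 1) ≠ X n) : HasStair R := by
  have hmono' : ∀ k j, k ≤ j → X k ⊆ X j := by
    intro k j h
    induction j, h using Nat.le_induction with
    | base => exact fun _ h => h
    | succ j hj ih => exact fun y hy => hmono j (ih hy)
  have hx : ∀ n, ∃ x ∈ X (n + 1), x ∉ X n := by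
    intro n
    by_contra h
    push_neg at h
    exact hne n (Set.Subset.antisymm h (hmono n))
  choose x hx1 hx2 using hx
  have hs : ∀ n, ∃ s ∈ T n, s * x n ≠ 0 := by
    intro n
    have h2 : ¬ ∀ t ∈ T n, t * x n = 0 := by
      intro hall
      exact hx2 n (by rw [hX n]; exact hall)
    push_neg at h2
    exact h2
  choose s hs1 hs2 using hs
  refine ⟨s, x, hs2, fun k j hkj => ?_⟩
  have hmem : x k ∈ X j := hmono' (k + 1) j hkj (hx1 k)
  rw [hX j] at hmem
  exact hmem _ (hs1 j)

lemma exists_maximal (hns : ¬ HasStair R) (𝒮 : Set (Set R))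
    (hS : ∀ X ∈ 𝒮, ∃ T : Set R, X = rAnn T) (X₀ : Set R) (h₀ : X₀ ∈ 𝒮) :
    ∃ M ∈ 𝒮, ∀ Y ∈ 𝒮, M ⊆ Y → Y = M := by
  by_contra hc
  push_neg at hc
  choose F hF1 hF2 hF3 using hc
  let g : ℕ → {X : Set R // X ∈ 𝒮} := fun n =>
    Nat.rec ⟨X₀, h₀⟩ (fun _ p => ⟨F p.1 p.2, hF1 p.1 p.2⟩) n
  choose T hT using fun n => hS (g n).1 (g n).2
  exact hns (hasStair_of_chain (fun n => (g n).1) T hT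
    (fun n => hF2 (g n).1 (g n).2) (fun n => hF3 (g n).1 (g n).2))

lemma swap_ann (hsp : IsSemiprimeRing' R) (T : Set R) (hT : MulClosed T)
    (t : R) (h : ∀ c ∈ T, t * c = 0) : ∀ c ∈ T, c * t = 0 := by
  intro c hc
  apply hsp
  intro ρ
  have h1 : t * (ρ * c) = 0 := h _ (hT c hc ρ).1
  calc c * t * ρ * (c * t) = c * (t * (ρ * c)) * t := by simp only [mul_assoc]
  _ = 0 := by rw [h1]; simp

lemma step (hsp : IsSemiprimeRing' R) (hns : ¬ HasStair R)
    (C : TwoSidedIdeal R) (hC : C ≠ ⊥) :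
    ∃ (P : TwoSidedIdeal R) (t s : R), P.IsPrime' ∧
      (∀ c ∈ C ⊓ P, c * t = 0) ∧ s ∈ C ∧ s * t ≠ 0 := by
  obtain ⟨c₀, hc₀C, hc₀⟩ := exists_ne_zero_of_ne_bot hC
  set 𝒮 : Set (Set R) :=
    {X | (∃ T : Set R, MulClosed T ∧ (∃ u ∈ T, u ≠ 0) ∧ X = rAnn T) ∧ rAnn (C : Set R) ⊆ X}
    with h𝒮
  have h₀ : rAnn (C : Set R) ∈ 𝒮 :=
    ⟨⟨(C : Set R), mulClosed_coe C, ⟨c₀, hc₀C, hc₀⟩, rfl⟩, fun _ h => h⟩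
  obtain ⟨M, ⟨⟨T, hTmc, ⟨u₀, hu₀T, hu₀⟩, hMT⟩, hCM⟩, hmax⟩ :=
    exists_maximal hns 𝒮 (fun X hX => hX.1.imp fun T h => h.2.2) _ h₀
  subst hMT
  -- build the two-sided ideal with carrier `rAnn T`
  let P : TwoSidedIdeal R := TwoSidedIdeal.mk' (rAnn T)
    (fun t ht => mul_zero t)
    (fun {x y} hx hy t ht => by rw [mul_add, hx t ht, hy t ht, add_zero])
    (fun {x} hx t ht => by rw [mul_neg, hx t ht, neg_zero])
    (fun {x y} hy t ht => by rw [← mul_assoc]; exact hy _ (hTmc t ht x).2)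
    (fun {x y} hx t ht => by rw [← mul_assoc, hx t ht, zero_mul])
  have hPmem : ∀ z : R, z ∈ P ↔ z ∈ rAnn T :=
    TwoSidedIdeal.mem_mk' (rAnn T) _ _ _ _ _
  have hPne : P ≠ ⊤ := by
    intro h
    have h1 : (1 : R) ∈ P := h ▸ TwoSidedIdeal.mem_top _
    have := (hPmem 1).1 h1 u₀ hu₀T
    rw [mul_one] at this
    exact hu₀ this
  have hPprime : P.IsPrime' := by
    refine ⟨hPne, fun a b hab => ?_⟩
    by_cases haP : a ∈ P
    · exact Or.inl haP
    right
    have haM : ¬ ∀ j ∈ T, j * a = 0 := fun h => haP ((hPmem a).2 h)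
    push_neg at haM
    obtain ⟨j, hjT, hja⟩ := haM
    set T' : Set R := {y | ∃ u ∈ T, ∃ ρ : R, y = u * a * ρ} with hT'
    have hT'mc : MulClosed T' := by
      rintro y ⟨u, hu, ρ, rfl⟩ σ
      constructor
      · exact ⟨σ * u, (hTmc u hu σ).1, ρ, by simp only [mul_assoc]⟩
      · exact ⟨u, hu, ρ * σ, by simp only [mul_assoc]⟩
    have hT'wit : ∃ v ∈ T', v ≠ 0 :=
      ⟨j * a * 1, ⟨j, hjT, 1, rfl⟩, by simpa using hja⟩
    have hTT' : rAnn T ⊆ rAnn T' := by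
      rintro z hz y ⟨u, hu, ρ, rfl⟩
      exact hz _ (hTmc _ (hTmc u hu a).2 ρ).2
    have hmem𝒮 : rAnn T' ∈ 𝒮 := ⟨⟨T', hT'mc, hT'wit, rfl⟩, hCM.trans hTT'⟩
    have heq : rAnn T' = rAnn T := hmax _ hmem𝒮 hTT'
    have hb : b ∈ rAnn T' := by
      rintro y ⟨u, hu, ρ, rfl⟩
      have h2 : u * (a * ρ * b) = 0 := (hPmem _).1 (hab ρ) u hu
      calc u * a * ρ * b = u * (a * ρ * b) := by simp only [mul_assoc]
      _ = 0 := h2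
    exact (hPmem b).2 (heq ▸ hb)
  have hT₁ : ∃ t₁ ∈ T, t₁ ∉ rAnn (C : Set R) := by
    by_contra h
    push_neg at h
    apply hu₀
    apply hsp
    intro ρ
    have h1 : u₀ * ρ ∈ T := (hTmc u₀ hu₀T ρ).2
    exact hCM (h u₀ hu₀T) _ h1
  obtain ⟨t₁, ht₁T, ht₁⟩ := hT₁
  have hst : ∃ s ∈ (C : Set R), s * t₁ ≠ 0 := by
    have h2 : ¬ ∀ c ∈ (C : Set R), c * t₁ = 0 := ht₁
    push_neg at h2
    exact h2
  obtain ⟨s, hsC, hst₁⟩ := hst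
  refine ⟨P, t₁, s, hPprime, ?_, hsC, hst₁⟩
  intro c hc
  have hc2 : ∀ d ∈ ((C ⊓ P : TwoSidedIdeal R) : Set R), t₁ * d = 0 := by
    intro d hd
    exact (hPmem d).1 ((TwoSidedIdeal.mem_inf _).1 hd).2 t₁ ht₁T
  exact swap_ann hsp _ (mulClosed_coe (C ⊓ P)) t₁ hc2 c hc

lemma inf_le_prime {Q I P : TwoSidedIdeal R} (hQ : Q.IsPrime') (h : I ⊓ P ≤ Q) :
    I ≤ Q ∨ P ≤ Q := by
  by_cases hI : I ≤ Q
  · exact Or.inl hI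
  right
  rw [SetLike.not_le_iff_exists] at hI
  obtain ⟨a, haI, haQ⟩ := hI
  intro b hb
  rcases hQ.2 a b (fun r => h ((TwoSidedIdeal.mem_inf _).2
    ⟨I.mul_mem_right _ _ (I.mul_mem_right _ _ haI), P.mul_mem_left _ _ hb⟩)) with h1 | h1
  · exact absurd h1 haQ
  · exact h1

lemma finite_of_noStair (hsp : IsSemiprimeRing' R) (hns : ¬ HasStair R) :
    {P : TwoSidedIdeal R | P.IsMinimalPrime'}.Finite := by
  classical
  letI : DecidableEq (TwoSidedIdeal R) := Classical.decEq _
  have hstep := step hsp hns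
  choose Pf tf sf hPf hct hsC hst using hstep
  let D : ℕ → TwoSidedIdeal R := fun n =>
    Nat.rec (motive := fun _ => TwoSidedIdeal R) ⊤
      (fun _ Cp => if h : Cp = (⊥ : TwoSidedIdeal R) then ⊥ else Cp ⊓ Pf Cp h) n
  have hDsucc : ∀ n, D (n + 1) = if h : D n = (⊥ : TwoSidedIdeal R) then ⊥ else D n ⊓ Pf (D n) h := fun n => rfl
  have hmono : ∀ n, D (n + 1) ≤ D n := by
    intro n
    rw [hDsucc n]
    split
    · exact bot_le
    · exact inf_le_left
  have hmono' : ∀ k j, k ≤ j → D j ≤ D k := by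
    intro k j h
    induction j, h using Nat.le_induction with
    | base => exact le_rfl
    | succ j hj ih => exact (hmono j).trans ih
  have hbot : ∃ n, D n = ⊥ := by
    by_contra h
    push_neg at h
    apply hns
    refine ⟨fun k => sf (D k) (h k), fun k => tf (D k) (h k), fun k => hst _ _, ?_⟩
    intro k j hkj
    have h1 : sf (D j) (h j) ∈ D (k + 1) := hmono' (k + 1) j hkj (hsC (D j) (h j))
    rw [hDsucc k, dif_neg (h k)] at h1
    exact hct (D k) (h k) _ h1
  set n := Nat.find hbot with hn
  have hDn : D n = ⊥ := Nat.find_spec hbot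
  have hlt : ∀ j, j < n → D j ≠ ⊥ := fun j hj => Nat.find_min hbot hj
  let PL : ℕ → TwoSidedIdeal R := fun j => if h : D j = ⊥ then ⊤ else Pf (D j) h
  have key : ∀ Q : TwoSidedIdeal R, Q.IsMinimalPrime' → ∃ j, j < n ∧ PL j = Q := by
    intro Q hQ
    have descend : ∀ k, k ≤ n → D k ≤ Q →
        ∃ j, j < k ∧ ∃ (hj : D j ≠ ⊥), Pf (D j) hj ≤ Q := by
      intro k
      induction k with
      | zero =>
        intro _ hle
        exact absurd (top_le_iff.1 hle) hQ.1.1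
      | succ k ih =>
        intro hk hle
        have hkn : k < n := hk
        have hDk : D k ≠ ⊥ := hlt k hkn
        rw [hDsucc k, dif_neg hDk] at hle
        rcases inf_le_prime hQ.1 hle with h1 | h1
        · obtain ⟨j, hj, hjj⟩ := ih (le_of_lt hkn) h1
          exact ⟨j, Nat.lt_succ_of_lt hj, hjj⟩
        · exact ⟨k, Nat.lt_succ_self k, hDk, h1⟩
    obtain ⟨j, hj, hjne, hle⟩ := descend n le_rfl (hDn ▸ bot_le)
    refine ⟨j, hj, ?_⟩
    have hQeq := hQ.2 (Pf (D j) hjne) (hPf (D j) hjne) hle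
    rw [show PL j = Pf (D j) hjne from dif_neg hjne]
    exact hQeq
  apply Set.Finite.subset ((Set.finite_Iio n).image PL)
  intro Q hQ
  obtain ⟨j, hj, hjQ⟩ := key Q hQ
  exact ⟨j, hj, hjQ⟩

lemma eq_zero_of_nilpotentSet (hsp : IsSemiprimeRing' R) (N : Set R)
    (hN : ∀ x ∈ N, ∀ ρ : R, ρ * x ∈ N)
    (m : ℕ) (hm : m ≠ 0)
    (h : ∀ l : List R, (∀ x ∈ l, x ∈ N) → l.length = m → l.prod = 0) :
    ∀ x ∈ N, x = 0 := by
  set A : ℕ → Prop :=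
    fun k => ∀ l : List R, (∀ x ∈ l, x ∈ N) → l.length = k → l.prod = 0 with hA
  have up : ∀ k, A k → A (k + 1) := by
    intro k hk l hl hlen
    cases l with
    | nil => simp at hlen
    | cons a t =>
      have ht : t.prod = 0 :=
        hk t (fun x hx => hl x (List.mem_cons_of_mem a hx)) (by simpa using hlen)
      rw [List.prod_cons, ht, mul_zero]
  have upAll : ∀ k, A k → ∀ j, k ≤ j → A j := by
    intro k hk j hj
    induction j, hj using Nat.le_induction with
    | base => exact hk
    | succ j hj ih => exact up j ih
  have down : ∀ k, k ≠ 0 → (∀ j, k + 1 ≤ j → A j) → A k := by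
    intro k hk hB l hl hlen
    cases l with
    | nil => simp at hlen; omega
    | cons a t =>
      refine hsp _ fun ρ => ?_
      have hρa : ρ * a ∈ N := hN a (hl a (List.mem_cons_self (a := a) (l := t))) ρ
      have hlen2 : ((a :: t) ++ ((ρ * a) :: t)).length = k + k := by
        simp only [List.length_append, List.length_cons] at hlen ⊢
        omega
      have hmem2 : ∀ x ∈ (a :: t) ++ ((ρ * a) :: t), x ∈ N := by
        intro x hx
        rcases List.mem_append.1 hx with h1 | h1
        · exact hl x h1
        · rcases List.mem_cons.1 h1 with h2 | h2
          · rw [h2]; exact hρa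
          · exact hl x (List.mem_cons_of_mem a h2)
      have h0 : ((a :: t) ++ ((ρ * a) :: t)).prod = 0 := by
        have hkk : k + 1 ≤ k + k := by omega
        exact upAll (k + 1) (hB (k + 1) le_rfl) (k + k) hkk _ hmem2 hlen2
      calc (a :: t).prod * ρ * (a :: t).prod
          = ((a :: t) ++ ((ρ * a) :: t)).prod := by
            simp only [List.prod_append, List.prod_cons, mul_assoc]
      _ = 0 := h0
  have claim : ∀ d k, k ≠ 0 → k + d = m → ∀ j, k ≤ j → A j := by
    intro d
    induction d with
    | zero =>
      intro k hk hkm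
      have hAk : A k := by rw [Nat.add_zero] at hkm; rw [hkm]; exact h
      exact upAll k hAk
    | succ d ih =>
      intro k hk hkm j hj
      have hB : ∀ j, k + 1 ≤ j → A j := ih (k + 1) (Nat.succ_ne_zero k) (by omega)
      rcases Nat.eq_or_lt_of_le hj with h1 | h1
      · rw [← h1]; exact down k hk hB
      · exact hB j h1
  have hA1 : A 1 := claim (m - 1) 1 one_ne_zero (by omega) 1 le_rfl
  intro x hx
  have := hA1 [x] (fun y hy => by rw [List.mem_singleton.1 hy]; exact hx) rfl
  simpa using this

end StmtAux

/-- A semiprime ring with infinitely many minimal primes cannot be embedded into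
a semiprimary ring. -/
theorem stmt_5 {R : Type*} [Ring R] (hsp : IsSemiprimeRing' R)
    (hinf : {P : TwoSidedIdeal R | P.IsMinimalPrime'}.Infinite)
    (A : Type*) [Ring A] (hA : IsSemiprimaryRing' A) (f : R →+* A) :
    ¬ Function.Injective f := by
  intro hf
  obtain ⟨hss, n, hn0, hnil⟩ := hA
  set J := TwoSidedIdeal.jacobson (⊥ : TwoSidedIdeal A) with hJ
  have hker : ∀ r : R, f r ∈ J → r = 0 := by
    have hNmul : ∀ x ∈ {r : R | f r ∈ J}, ∀ ρ : R, ρ * x ∈ {r : R | f r ∈ J} := by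
      intro x hx ρ
      show f (ρ * x) ∈ J
      rw [map_mul]
      exact J.mul_mem_left _ _ hx
    have hprod : ∀ l : List R, (∀ x ∈ l, x ∈ {r : R | f r ∈ J}) → l.length = n →
        l.prod = 0 := by
      intro l hl hlen
      apply hf
      rw [map_zero, map_list_prod]
      apply hnil
      · intro x hx
        obtain ⟨y, hy, rfl⟩ := List.mem_map.1 hx
        exact hl y hy
      · simpa using hlen
    exact fun r hr => StmtAux.eq_zero_of_nilpotentSet hsp _ hNmul n hn0 hprod r hr
  have hns : ¬ StmtAux.HasStair R := by
    rintro ⟨s, x, h1, h2⟩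
    haveI : IsSemisimpleRing J.ringCon.Quotient := hss
    let g : R →+* J.ringCon.Quotient := (RingCon.mk' J.ringCon).comp f
    have hg : ∀ r : R, g r = 0 → r = 0 := by
      intro r hr
      apply hker
      rw [TwoSidedIdeal.mem_iff]
      have h3 : ((f r : A) : J.ringCon.Quotient) = ((0 : A) : J.ringCon.Quotient) := by
        rw [RingCon.coe_zero]
        exact hr
      exact J.ringCon.eq.1 h3
    let Z : ℕ → Submodule J.ringCon.Quotient J.ringCon.Quotient := fun k =>
      { carrier := {y | ∀ j, j < k → y * g (x j) = 0}
        add_mem' := fun {a b} ha hb j hj => by rw [add_mul, ha j hj, hb j hj, add_zero]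
        zero_mem' := fun j hj => zero_mul _
        smul_mem' := fun q y hy j hj => by
          rw [smul_eq_mul, mul_assoc, hy j hj, mul_zero] }
    have hZmem : ∀ k y, y ∈ Z k ↔ ∀ j, j < k → y * g (x j) = 0 := fun _ _ => Iff.rfl
    have hZanti : ∀ a b : ℕ, a ≤ b → Z b ≤ Z a := by
      intro a b hab y hy j hj
      exact hy j (lt_of_lt_of_le hj hab)
    obtain ⟨m, hm⟩ := IsArtinian.monotone_stabilizes
      (⟨fun k => OrderDual.toDual (Z k), fun a b hab => hZanti a b hab⟩ :
        ℕ →o (Submodule J.ringCon.Quotient J.ringCon.Quotient)ᵒᵈ)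
    have hZeq : Z m = Z (m + 1) := congrArg OrderDual.ofDual (hm (m + 1) (Nat.le_succ m))
    have hmem : g (s m) ∈ Z m := by
      intro j hj
      rw [← map_mul, h2 j m hj, map_zero]
    have hnot : g (s m) ∉ Z (m + 1) := by
      intro hc
      have h4 := hc m (Nat.lt_succ_self m)
      rw [← map_mul] at h4
      exact h1 m (hg _ h4)
    exact hnot (hZeq ▸ hmem)
  exact hinf (StmtAux.finite_of_noStair hsp hns)
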